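/- Let θ : ĝ → g be a central extension of restricted Lie algebras over F with kernel h (so [h,ĝ] = 0 and u^[2]_ĝ = 0 for all u ∈ h). Assume that every 2-cocycle of (g,[2]_g) with values in the trivial module h is a 2-coboundary: for every alternating F-bilinear ψ : g×g → h and map ς : g → h with ς(a·x) = a²·ς(x), ς(x+y) = ς(x) + ς(y) + ψ(x,y), ψ(x,[y,z]) + ψ(y,[z,x]) + ψ(z,[x,y]) = 0, and ψ(x^[2]_g,y) + ψ([x,y],x) = 0, there exists an F-linear map λ : g → h with ψ(x,y) = λ([x,y]) and ς(x) = λ(x^[2]_g). Then every pair (D_h, D_g), where D_h : h → h is F-linear and D_g is a restricted derivation of (g,[2]_g), is extensible: there exists a restricted derivation D_ĝ of (ĝ,[2]_ĝ) with D_ĝ(u) = D_h(u) for all u ∈ h and θ∘D_ĝ = D_g∘θ. -/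

import Mathlib

set_option maxHeartbeats 1000000 in
/-- if every 2-cocycle of `(g,[2])` with values in the trivial module
`h = ker θ` is a 2-coboundary, then every pair `(D_h, D_g)` of a linear map on the
kernel and a restricted derivation of `g` is extensible to a restricted derivation of
`ĝ`. -/
theorem stmt18
    {F : Type*} [Field F] [CharP F 2]
    {g : Type*} [LieRing g] [LieAlgebra F g]
    {gh : Type*} [LieRing gh] [LieAlgebra F gh]
    -- restricted structure on g
    (sqg : g → g)
    (hsqg_ad : ∀ x y : g, ⁅sqg x, y⁆ = ⁅x, ⁅x, y⁆⁆)
    (hsqg_smul : ∀ (a : F) (x : g), sqg (a • x) = a ^ 2 • sqg x)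
    (hsqg_add : ∀ x y : g, sqg (x + y) = sqg x + sqg y + ⁅x, y⁆)
    -- restricted structure on ĝ
    (sqgh : gh → gh)
    (hsqgh_ad : ∀ u v : gh, ⁅sqgh u, v⁆ = ⁅u, ⁅u, v⁆⁆)
    (hsqgh_smul : ∀ (a : F) (u : gh), sqgh (a • u) = a ^ 2 • sqgh u)
    (hsqgh_add : ∀ u v : gh, sqgh (u + v) = sqgh u + sqgh v + ⁅u, v⁆)
    -- θ : ĝ → g is a central extension of restricted Lie algebras with kernel h
    (θ : gh →ₗ⁅F⁆ g)
    (hθsurj : Function.Surjective θ)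
    (hθsq : ∀ u : gh, θ (sqgh u) = sqg (θ u))
    (hcentral : ∀ u : gh, θ u = 0 → ∀ v : gh, ⁅u, v⁆ = 0)
    (hker_sq : ∀ u : gh, θ u = 0 → sqgh u = 0)
    -- every 2-cocycle of g with values in the trivial module h is a 2-coboundary:
    (H2 : ∀ (ψ : g → g → gh) (ς : g → gh),
      (∀ x y : g, θ (ψ x y) = 0) →
      (∀ x : g, θ (ς x) = 0) →
      (∀ (a : F) (x x' y : g), ψ (a • x + x') y = a • ψ x y + ψ x' y) →
      (∀ (a : F) (x y y' : g), ψ x (a • y + y') = a • ψ x y + ψ x y') →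
      (∀ x : g, ψ x x = 0) →
      (∀ (a : F) (x : g), ς (a • x) = a ^ 2 • ς x) →
      (∀ x y : g, ς (x + y) = ς x + ς y + ψ x y) →
      (∀ x y z : g, ψ x ⁅y, z⁆ + ψ y ⁅z, x⁆ + ψ z ⁅x, y⁆ = 0) →
      (∀ x y : g, ψ (sqg x) y + ψ ⁅x, y⁆ x = 0) →
      ∃ lam : g →ₗ[F] gh,
        (∀ x : g, θ (lam x) = 0) ∧
        (∀ x y : g, ψ x y = lam ⁅x, y⁆) ∧
        (∀ x : g, ς x = lam (sqg x))) :
    -- then every pair (D_h, D_g) is extensible: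
    ∀ (Dh : gh →ₗ[F] gh), (∀ u : gh, θ u = 0 → θ (Dh u) = 0) →
    ∀ (Dg : g →ₗ[F] g),
      (∀ x y : g, Dg ⁅x, y⁆ = ⁅Dg x, y⁆ + ⁅x, Dg y⁆) →
      (∀ x : g, Dg (sqg x) = ⁅x, Dg x⁆) →
      ∃ Dgh : gh →ₗ[F] gh,
        (∀ u v : gh, Dgh ⁅u, v⁆ = ⁅Dgh u, v⁆ + ⁅u, Dgh v⁆) ∧
        (∀ u : gh, Dgh (sqgh u) = ⁅u, Dgh u⁆) ∧
        (∀ u : gh, θ u = 0 → Dgh u = Dh u) ∧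
        (∀ u : gh, θ (Dgh u) = Dg (θ u)) := by
  intro Dh hDh Dg hDgLie hDgSq
  -- a linear section of θ
  obtain ⟨s, hs0⟩ := θ.toLinearMap.exists_rightInverse_of_surjective
    (LinearMap.range_eq_top.2 hθsurj)
  have hs : ∀ x : g, θ (s x) = x := fun x => LinearMap.ext_iff.mp hs0 x
  -- characteristic 2 facts in gh
  have h20 : (2 : F) = 0 := by exact_mod_cast CharP.cast_eq_zero F 2
  have h2 : ∀ u : gh, u + u = 0 := by
    intro u
    calc u + u = (2 : F) • u := (two_smul F u).symm
    _ = 0 := by rw [h20, zero_smul]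
  have hneg : ∀ u : gh, -u = u := fun u => neg_eq_of_add_eq_zero_left (h2 u)
  have hswap : ∀ u v : gh, ⁅u, v⁆ = ⁅v, u⁆ := by
    intro u v; rw [← lie_skew, hneg]
  -- centrality lemmas
  have hcl : ∀ u u' v : gh, θ u = θ u' → ⁅u, v⁆ = ⁅u', v⁆ := by
    intro u u' v h
    have h0 : θ (u - u') = 0 := by rw [map_sub, h, sub_self]
    have := hcentral (u - u') h0 v
    rw [sub_lie, sub_eq_zero] at this
    exact this
  have hcr : ∀ u v v' : gh, θ v = θ v' → ⁅u, v⁆ = ⁅u, v'⁆ := by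
    intro u v v' h
    rw [hswap u v, hswap u v', hcl v v' u h]
  have hsqeq : ∀ u u' : gh, θ u = θ u' → sqgh u = sqgh u' := by
    intro u u' h
    have h0 : θ (u - u') = 0 := by rw [map_sub, h, sub_self]
    have huu : u = u' + (u - u') := by abel
    rw [huu, hsqgh_add, hker_sq _ h0, hswap, hcentral _ h0 u', add_zero, add_zero]
  -- the auxiliary linear map D0
  set D0 : gh →ₗ[F] gh :=
    s ∘ₗ Dg ∘ₗ θ.toLinearMap + Dh ∘ₗ (LinearMap.id - s ∘ₗ θ.toLinearMap) with hD0def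
  have hD0 : ∀ u : gh, D0 u = s (Dg (θ u)) + Dh (u - s (θ u)) := by
    intro u; simp [hD0def]
  have hD0θ : ∀ u : gh, θ (D0 u) = Dg (θ u) := by
    intro u
    rw [hD0, map_add, hs,
      hDh _ (by rw [map_sub, hs, sub_self]), add_zero]
  have hD0ker : ∀ u : gh, θ u = 0 → D0 u = Dh u := by
    intro u h; rw [hD0, h]; simp
  -- the 2-cocycle (ψ, ς)
  set ψ : g → g → gh :=
    fun x y => D0 ⁅s x, s y⁆ - ⁅s (Dg x), s y⁆ - ⁅s x, s (Dg y)⁆ with hψdef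
  set ς : g → gh :=
    fun x => D0 (sqgh (s x)) - ⁅s x, s (Dg x)⁆ with hςdef
  -- cocycle conditions
  have c1 : ∀ x y : g, θ (ψ x y) = 0 := by
    intro x y
    simp only [hψdef, map_sub, hD0θ, LieHom.map_lie, hs, hDgLie]
    abel
  have c2 : ∀ x : g, θ (ς x) = 0 := by
    intro x
    simp only [hςdef, map_sub, hD0θ, hθsq, hs, hDgSq, LieHom.map_lie, sub_self]
  have c3 : ∀ (a : F) (x x' y : g), ψ (a • x + x') y = a • ψ x y + ψ x' y := by
    intro a x x' y
    simp only [hψdef, map_add, map_smul, add_lie, smul_lie, smul_sub]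
    abel
  have c4 : ∀ (a : F) (x y y' : g), ψ x (a • y + y') = a • ψ x y + ψ x y' := by
    intro a x y y'
    simp only [hψdef, map_add, map_smul, lie_add, lie_smul, smul_sub]
    abel
  have c5 : ∀ x : g, ψ x x = 0 := by
    intro x
    have e : ψ x x = ⁅s (Dg x), s x⁆ + ⁅s x, s (Dg x)⁆ := by
      simp only [hψdef, lie_self, map_zero, zero_sub, sub_eq_add_neg, hneg, zero_add]
    rw [e, hswap (s (Dg x)) (s x)]
    exact h2 _
  have c6 : ∀ (a : F) (x : g), ς (a • x) = a ^ 2 • ς x := by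
    intro a x
    simp only [hςdef, map_smul, hsqgh_smul, lie_smul, smul_lie, smul_smul, smul_sub,
      ← sq]
  have c7 : ∀ x y : g, ς (x + y) = ς x + ς y + ψ x y := by
    intro x y
    simp only [hςdef, hψdef, map_add, hsqgh_add, lie_add, add_lie]
    rw [hswap (s y) (s (Dg x))]
    abel
  have c8 : ∀ x y z : g, ψ x ⁅y, z⁆ + ψ y ⁅z, x⁆ + ψ z ⁅x, y⁆ = 0 := by
    intro x y z
    have rb : ∀ (q r : g) (w : gh), ⁅w, s ⁅q, r⁆⁆ = ⁅w, ⁅s q, s r⁆⁆ := by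
      intro q r w
      exact hcr _ _ _ (by rw [hs, LieHom.map_lie, hs, hs])
    have rd : ∀ (q r : g) (w : gh),
        ⁅w, s (Dg ⁅q, r⁆)⁆ = ⁅w, ⁅s (Dg q), s r⁆ + ⁅s q, s (Dg r)⁆⁆ := by
      intro q r w
      exact hcr _ _ _ (by
        rw [hs, map_add, LieHom.map_lie, LieHom.map_lie, hs, hs, hs, hs, hDgLie])
    have e1 : ψ x ⁅y, z⁆ = D0 ⁅s x, ⁅s y, s z⁆⁆ - ⁅s (Dg x), ⁅s y, s z⁆⁆
        - ⁅s x, ⁅s (Dg y), s z⁆⁆ - ⁅s x, ⁅s y, s (Dg z)⁆⁆ := by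
      rw [hψdef]
      simp only [rb y z, rd y z]
      rw [lie_add]
      abel
    have e2 : ψ y ⁅z, x⁆ = D0 ⁅s y, ⁅s z, s x⁆⁆ - ⁅s (Dg y), ⁅s z, s x⁆⁆
        - ⁅s y, ⁅s (Dg z), s x⁆⁆ - ⁅s y, ⁅s z, s (Dg x)⁆⁆ := by
      rw [hψdef]
      simp only [rb z x, rd z x]
      rw [lie_add]
      abel
    have e3 : ψ z ⁅x, y⁆ = D0 ⁅s z, ⁅s x, s y⁆⁆ - ⁅s (Dg z), ⁅s x, s y⁆⁆
        - ⁅s z, ⁅s (Dg x), s y⁆⁆ - ⁅s z, ⁅s x, s (Dg y)⁆⁆ := by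
      rw [hψdef]
      simp only [rb x y, rd x y]
      rw [lie_add]
      abel
    rw [e1, e2, e3]
    have J0 := lie_jacobi (s x) (s y) (s z)
    have J1 := lie_jacobi (s (Dg x)) (s y) (s z)
    have J2 := lie_jacobi (s (Dg y)) (s z) (s x)
    have J3 := lie_jacobi (s (Dg z)) (s x) (s y)
    calc D0 ⁅s x, ⁅s y, s z⁆⁆ - ⁅s (Dg x), ⁅s y, s z⁆⁆
        - ⁅s x, ⁅s (Dg y), s z⁆⁆ - ⁅s x, ⁅s y, s (Dg z)⁆⁆
        + (D0 ⁅s y, ⁅s z, s x⁆⁆ - ⁅s (Dg y), ⁅s z, s x⁆⁆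
          - ⁅s y, ⁅s (Dg z), s x⁆⁆ - ⁅s y, ⁅s z, s (Dg x)⁆⁆)
        + (D0 ⁅s z, ⁅s x, s y⁆⁆ - ⁅s (Dg z), ⁅s x, s y⁆⁆
          - ⁅s z, ⁅s (Dg x), s y⁆⁆ - ⁅s z, ⁅s x, s (Dg y)⁆⁆)
        = D0 (⁅s x, ⁅s y, s z⁆⁆ + ⁅s y, ⁅s z, s x⁆⁆ + ⁅s z, ⁅s x, s y⁆⁆)
          - (⁅s (Dg x), ⁅s y, s z⁆⁆ + ⁅s y, ⁅s z, s (Dg x)⁆⁆ + ⁅s z, ⁅s (Dg x), s y⁆⁆)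
          - (⁅s (Dg y), ⁅s z, s x⁆⁆ + ⁅s z, ⁅s x, s (Dg y)⁆⁆ + ⁅s x, ⁅s (Dg y), s z⁆⁆)
          - (⁅s (Dg z), ⁅s x, s y⁆⁆ + ⁅s x, ⁅s y, s (Dg z)⁆⁆ + ⁅s y, ⁅s (Dg z), s x⁆⁆) := by
          rw [map_add, map_add]; abel
      _ = 0 := by rw [J0, J1, J2, J3, map_zero]; abel
  have c9 : ∀ x y : g, ψ (sqg x) y + ψ ⁅x, y⁆ x = 0 := by
    intro x y
    have rsq : ∀ w : gh, ⁅s (sqg x), w⁆ = ⁅s x, ⁅s x, w⁆⁆ := by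
      intro w
      rw [hcl (s (sqg x)) (sqgh (s x)) w (by rw [hs, hθsq, hs]), hsqgh_ad]
    have rdsq : ∀ w : gh, ⁅s (Dg (sqg x)), w⁆ = ⁅⁅s x, s (Dg x)⁆, w⁆ := by
      intro w
      exact hcl _ _ _ (by rw [hs, LieHom.map_lie, hs, hs, hDgSq])
    have rl : ∀ w : gh, ⁅s ⁅x, y⁆, w⁆ = ⁅⁅s x, s y⁆, w⁆ := by
      intro w
      exact hcl _ _ _ (by rw [hs, LieHom.map_lie, hs, hs])
    have rdl : ∀ w : gh, ⁅s (Dg ⁅x, y⁆), w⁆ = ⁅⁅s (Dg x), s y⁆ + ⁅s x, s (Dg y)⁆, w⁆ := by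
      intro w
      exact hcl _ _ _ (by
        rw [hs, map_add, LieHom.map_lie, LieHom.map_lie, hs, hs, hs, hs, hDgLie])
    have e1 : ψ (sqg x) y = D0 ⁅s x, ⁅s x, s y⁆⁆ - ⁅⁅s x, s (Dg x)⁆, s y⁆
        - ⁅s x, ⁅s x, s (Dg y)⁆⁆ := by
      rw [hψdef]
      simp only [rsq, rdsq]
    have e2 : ψ ⁅x, y⁆ x = D0 ⁅⁅s x, s y⁆, s x⁆ - ⁅⁅s (Dg x), s y⁆, s x⁆
        - ⁅⁅s x, s (Dg y)⁆, s x⁆ - ⁅⁅s x, s y⁆, s (Dg x)⁆ := by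
      rw [hψdef]
      simp only [rl, rdl, add_lie]
      abel
    rw [e1, e2]
    have r3 : ⁅⁅s x, s (Dg x)⁆, s y⁆ + ⁅⁅s (Dg x), s y⁆, s x⁆
        + ⁅⁅s x, s y⁆, s (Dg x)⁆ = 0 := by
      rw [hswap ⁅s x, s (Dg x)⁆ (s y), hswap ⁅s (Dg x), s y⁆ (s x),
        hswap ⁅s x, s y⁆ (s (Dg x)), hswap (s x) (s y)]
      rw [show ⁅s y, ⁅s x, s (Dg x)⁆⁆ + ⁅s x, ⁅s (Dg x), s y⁆⁆ + ⁅s (Dg x), ⁅s y, s x⁆⁆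
          = ⁅s x, ⁅s (Dg x), s y⁆⁆ + ⁅s (Dg x), ⁅s y, s x⁆⁆ + ⁅s y, ⁅s x, s (Dg x)⁆⁆
          from by abel]
      exact lie_jacobi _ _ _
    rw [hswap ⁅s x, s y⁆ (s x), hswap ⁅s x, s (Dg y)⁆ (s x)]
    calc D0 ⁅s x, ⁅s x, s y⁆⁆ - ⁅⁅s x, s (Dg x)⁆, s y⁆ - ⁅s x, ⁅s x, s (Dg y)⁆⁆
        + (D0 ⁅s x, ⁅s x, s y⁆⁆ - ⁅⁅s (Dg x), s y⁆, s x⁆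
          - ⁅s x, ⁅s x, s (Dg y)⁆⁆ - ⁅⁅s x, s y⁆, s (Dg x)⁆)
        = (D0 ⁅s x, ⁅s x, s y⁆⁆ + D0 ⁅s x, ⁅s x, s y⁆⁆)
          - (⁅⁅s x, s (Dg x)⁆, s y⁆ + ⁅⁅s (Dg x), s y⁆, s x⁆ + ⁅⁅s x, s y⁆, s (Dg x)⁆)
          - (⁅s x, ⁅s x, s (Dg y)⁆⁆ + ⁅s x, ⁅s x, s (Dg y)⁆⁆) := by abel
      _ = 0 := by rw [r3, h2, h2]; abel
  obtain ⟨lam, hlamker, hlamψ, hlamς⟩ := H2 ψ ς c1 c2 c3 c4 c5 c6 c7 c8 c9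
  refine ⟨D0 - lam ∘ₗ θ.toLinearMap, ?_, ?_, ?_, ?_⟩
  · intro u v
    have l1 : ⁅u, v⁆ = ⁅s (θ u), s (θ v)⁆ := by
      rw [hcl u (s (θ u)) v (hs _).symm, hcr _ v (s (θ v)) (hs _).symm]
    have l2 : ⁅D0 u - lam (θ u), v⁆ = ⁅s (Dg (θ u)), s (θ v)⁆ := by
      rw [hcl _ (s (Dg (θ u))) v
          (by rw [map_sub, hlamker, sub_zero, hD0θ, hs]),
        hcr _ v (s (θ v)) (hs _).symm]
    have l3 : ⁅u, D0 v - lam (θ v)⁆ = ⁅s (θ u), s (Dg (θ v))⁆ := by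
      rw [hcr u (D0 v - lam (θ v)) (s (Dg (θ v)))
          (by rw [map_sub, hlamker, sub_zero, hD0θ, hs]),
        hcl u (s (θ u)) _ (hs _).symm]
    simp only [LinearMap.sub_apply, LinearMap.coe_comp, Function.comp_apply,
      LieHom.coe_toLinearMap]
    rw [l2, l3, LieHom.map_lie, ← hlamψ, l1]
    simp only [hψdef]
    abel
  · intro u
    have l3 : ⁅u, D0 u - lam (θ u)⁆ = ⁅s (θ u), s (Dg (θ u))⁆ := by
      rw [hcr u (D0 u - lam (θ u)) (s (Dg (θ u)))
          (by rw [map_sub, hlamker, sub_zero, hD0θ, hs]),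
        hcl u (s (θ u)) _ (hs _).symm]
    simp only [LinearMap.sub_apply, LinearMap.coe_comp, Function.comp_apply,
      LieHom.coe_toLinearMap]
    rw [l3, hθsq, ← hlamς, hsqeq u (s (θ u)) (hs _).symm]
    simp only [hςdef]
    abel
  · intro u h
    simp only [LinearMap.sub_apply, LinearMap.coe_comp, Function.comp_apply,
      LieHom.coe_toLinearMap]
    rw [hD0ker u h, h, map_zero, sub_zero]
  · intro u
    simp only [LinearMap.sub_apply, LinearMap.coe_comp, Function.comp_apply,
      LieHom.coe_toLinearMap]
    rw [map_sub, hD0θ, hlamker, sub_zero]
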